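/- With the notation of the paper, S_ρ(Φ) = H^λ(b_ρ(Φ)) if and only if Φ(eᵢ) belongs to the abelian algebra B generated by {pⱼ} for every i with λᵢ ≠ 0, equivalently Φ(eᵢ) = Σⱼ b_{ij} pⱼ for all such i. -/

import Mathlib

open Matrix BigOperators ComplexOrder

/-- Entropy function `η(t) = -t log t` (with `η(0)=0` since `Real.log 0 = 0`). -/
noncomputable def eta (t : ℝ) : ℝ := -(t * Real.log t)

/-- Von Neumann entropy of a matrix: sum of `η` over eigenvalues (0 if not Hermitian). -/
noncomputable def vnEntropy {n : ℕ} (D : Matrix (Fin n) (Fin n) ℂ) : ℝ :=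
  if h : D.IsHermitian then ∑ i, eta (h.eigenvalues i) else 0

/-- Positive, unital, trace-preserving linear map on `M_n(ℂ)`. -/
def IsPUTP {n : ℕ} (Φ : Matrix (Fin n) (Fin n) ℂ →ₗ[ℂ] Matrix (Fin n) (Fin n) ℂ) : Prop :=
  (∀ x, x.PosSemidef → (Φ x).PosSemidef) ∧ Φ 1 = 1 ∧ ∀ x, (Φ x).trace = x.trace

/-- A family of mutually orthogonal rank-one (trace-one) self-adjoint projections
summing to the identity. -/
def IsSpectralFamily {n : ℕ} (e : Fin n → Matrix (Fin n) (Fin n) ℂ) : Prop :=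
  (∀ i, (e i).IsHermitian) ∧ (∀ i j, e i * e j = if i = j then e i else 0) ∧
    (∑ i, e i = 1) ∧ (∀ i, (e i).trace = 1)

section Aux
open Polynomial

lemma charpoly_diag {n : ℕ} (d : Fin n → ℂ) :
    (Matrix.diagonal d).charpoly = ∏ i, (X - C (d i)) := by
  rw [Matrix.charpoly]
  have : charmatrix (Matrix.diagonal d) = Matrix.diagonal (fun i => (X : ℂ[X]) - C (d i)) := by
    ext i j
    by_cases h : i = j
    · subst h; simp [charmatrix_apply_eq]
    · simp [charmatrix_apply_ne _ _ _ h, Matrix.diagonal_apply_ne _ h]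
  rw [this, Matrix.det_diagonal]

lemma charpoly_conj {n : ℕ} (V M : Matrix (Fin n) (Fin n) ℂ) (hV : V * star V = 1) :
    (V * M * star V).charpoly = M.charpoly := by
  let f : Matrix (Fin n) (Fin n) ℂ →+* Matrix (Fin n) (Fin n) ℂ[X] :=
    (Polynomial.C : ℂ →+* ℂ[X]).mapMatrix
  have hfmul : ∀ A B : Matrix (Fin n) (Fin n) ℂ, f (A * B) = f A * f B := fun A B => map_mul f A B
  have hfone : f 1 = 1 := map_one f
  have hVf : f V * f (star V) = 1 := by rw [← hfmul, hV, hfone]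
  have h1 : f V * Matrix.scalar (Fin n) (X : ℂ[X]) * f (star V)
      = Matrix.scalar (Fin n) (X : ℂ[X]) := by
    rw [(Matrix.scalar_commute (X : ℂ[X]) (fun r => Commute.all _ _) (f V)).symm.eq,
      mul_assoc, hVf, mul_one]
  have hchar : charmatrix (V * M * star V) = f V * charmatrix M * f (star V) := by
    show Matrix.scalar (Fin n) (X : ℂ[X]) - f (V * M * star V) = _
    rw [hfmul, hfmul]
    show _ = f V * (Matrix.scalar (Fin n) (X : ℂ[X]) - f M) * f (star V)
    rw [mul_sub, sub_mul, h1]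
  rw [Matrix.charpoly, hchar, Matrix.det_mul, Matrix.det_mul]
  have hdet : (f V).det * (f (star V)).det = 1 := by
    rw [← Matrix.det_mul, hVf, Matrix.det_one]
  calc (f V).det * (charmatrix M).det * (f (star V)).det
      = (charmatrix M).det * ((f V).det * (f (star V)).det) := by ring
    _ = (charmatrix M).det := by rw [hdet, mul_one]

lemma eta_eq : eta = Real.negMulLog := by
  funext t; rw [Real.negMulLog_eq_neg]; rfl

lemma multiset_eig {n : ℕ} {A : Matrix (Fin n) (Fin n) ℂ} (hA : A.IsHermitian)
    (V : Matrix (Fin n) (Fin n) ℂ) (hV : V * star V = 1) (c : Fin n → ℝ)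
    (hAdec : A = V * Matrix.diagonal (fun i => (c i : ℂ)) * star V) :
    ∑ i, eta (hA.eigenvalues i) = ∑ i, eta (c i) := by
  have key : ∀ (W : Matrix (Fin n) (Fin n) ℂ) (_ : W * star W = 1) (d : Fin n → ℝ)
      (_ : A = W * Matrix.diagonal (fun i => (d i : ℂ)) * star W),
      A.charpoly = ∏ i, (X - C ((d i : ℂ))) := by
    intro W hW d hdec
    rw [hdec, charpoly_conj _ _ hW, charpoly_diag]
  have h1 := key V hV c hAdec
  have h2 := key (hA.eigenvectorUnitary : Matrix (Fin n) (Fin n) ℂ)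
      (Matrix.mem_unitaryGroup_iff.mp hA.eigenvectorUnitary.2) hA.eigenvalues
      (by simpa [Function.comp_def] using hA.spectral_theorem)
  -- multisets of roots agree
  have hroots : (Finset.univ.val.map (fun i => ((hA.eigenvalues i : ℝ) : ℂ)))
      = (Finset.univ.val.map (fun i => ((c i : ℝ) : ℂ))) := by
    have e1 : ∀ (d : Fin n → ℝ), (∏ i, ((X : ℂ[X]) - C ((d i : ℂ)))).roots
        = Finset.univ.val.map (fun i => ((d i : ℝ) : ℂ)) := by
      intro d
      have h := Polynomial.roots_multiset_prod_X_sub_C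
        (Finset.univ.val.map (fun i => ((d i : ℝ) : ℂ)))
      rw [Multiset.map_map] at h
      simp only [Function.comp] at h
      rw [Finset.prod]
      exact h
    rw [← e1 hA.eigenvalues, ← e1 c, ← h1, ← h2]
  have := congrArg (fun (s : Multiset ℂ) => (s.map (fun z => eta z.re)).sum) hroots
  simpa [Multiset.map_map, Function.comp_def, Finset.sum] using this

lemma vnEntropy_eq {n : ℕ} {A : Matrix (Fin n) (Fin n) ℂ} (hA : A.IsHermitian) :
    vnEntropy A = ∑ i, eta (hA.eigenvalues i) := dif_pos hA

lemma psd_trace_nonneg {n : ℕ} {M : Matrix (Fin n) (Fin n) ℂ} (h : M.PosSemidef) : 0 ≤ M.trace := by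
  rw [Matrix.trace]
  apply Finset.sum_nonneg
  intro a _
  have := h.diag_nonneg (i := a)
  simpa [Matrix.diag] using this

lemma core_diag {n : ℕ} {Y : Matrix (Fin n) (Fin n) ℂ} (hY : Y.PosSemidef) (c : Fin n → ℝ)
    (hc : ∀ j, Y j j = (c j : ℂ)) :
    vnEntropy Y ≤ ∑ j, eta (c j) ∧
      (vnEntropy Y = ∑ j, eta (c j) ↔ Y = Matrix.diagonal (fun j => (c j : ℂ))) := by
  classical
  have hH : Y.IsHermitian := hY.1
  set U : Matrix (Fin n) (Fin n) ℂ := (hH.eigenvectorUnitary : Matrix (Fin n) (Fin n) ℂ) with hU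
  have hUU : U * star U = 1 := Matrix.mem_unitaryGroup_iff.mp hH.eigenvectorUnitary.2
  have hUU' : star U * U = 1 := Matrix.mem_unitaryGroup_iff'.mp hH.eigenvectorUnitary.2
  set x : Fin n → ℝ := hH.eigenvalues with hx
  have hxnn : ∀ k, 0 ≤ x k := hY.eigenvalues_nonneg
  have hspec : Y = U * Matrix.diagonal (fun k => (x k : ℂ)) * star U := by
    simpa [Function.comp_def] using hH.spectral_theorem
  set B : Fin n → Fin n → ℝ := fun j k => Complex.normSq (U j k) with hB
  have hBnn : ∀ j k, 0 ≤ B j k := fun j k => Complex.normSq_nonneg _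
  -- entries of Y
  have hent : ∀ a b, Y a b = ∑ k, U a k * (x k : ℂ) * (starRingEnd ℂ) (U b k) := by
    intro a b
    rw [hspec, Matrix.mul_apply]
    refine Finset.sum_congr rfl fun k _ => ?_
    rw [Matrix.mul_diagonal, Matrix.star_apply]
    rfl
  have hrow : ∀ j, ∑ k, B j k = 1 := by
    intro j
    have h := congrFun (congrFun hUU j) j
    have h2 : (U * star U) j j = ∑ k, (Complex.normSq (U j k) : ℂ) := by
      simp [Matrix.mul_apply, Matrix.star_apply, Matrix.conjTranspose_apply, Complex.mul_conj]
    rw [h2] at h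
    have : ((∑ k, B j k : ℝ) : ℂ) = 1 := by push_cast; simpa using h
    exact_mod_cast this
  have hcol : ∀ k, ∑ j, B j k = 1 := by
    intro k
    have h := congrFun (congrFun hUU' k) k
    have h2 : (star U * U) k k = ∑ j, (Complex.normSq (U j k) : ℂ) := by
      simp [Matrix.mul_apply, Matrix.star_apply, Matrix.conjTranspose_apply]
      congr 1; funext j
      rw [mul_comm, Complex.mul_conj]
    rw [h2] at h
    have : ((∑ j, B j k : ℝ) : ℂ) = 1 := by push_cast; simpa using h
    exact_mod_cast this
  have hcB : ∀ j, c j = ∑ k, B j k * x k := by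
    intro j
    have h := (hc j).symm.trans (hent j j)
    have h2 : ∑ k, U j k * (x k : ℂ) * (starRingEnd ℂ) (U j k)
        = ((∑ k, B j k * x k : ℝ) : ℂ) := by
      push_cast
      congr 1; funext k
      rw [mul_comm (U j k) ((x k : ℂ)), mul_assoc, Complex.mul_conj]
      ring
    rw [h2] at h
    exact_mod_cast h
  have jrow : ∀ j, ∑ k, B j k * eta (x k) ≤ eta (c j) := by
    intro j
    have := Real.concaveOn_negMulLog.le_map_sum (t := Finset.univ)
      (w := B j) (p := x) (fun k _ => hBnn j k) (hrow j) (fun k _ => hxnn k)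
    rw [eta_eq]
    simpa [smul_eq_mul, ← hcB j] using this
  have hswap : ∑ j, ∑ k, B j k * eta (x k) = ∑ k, eta (x k) := by
    rw [Finset.sum_comm]
    refine Finset.sum_congr rfl fun k _ => ?_
    rw [← Finset.sum_mul, hcol k, one_mul]
  have hle : vnEntropy Y ≤ ∑ j, eta (c j) := by
    rw [vnEntropy_eq hH, ← hswap]
    exact Finset.sum_le_sum fun j _ => jrow j
  refine ⟨hle, ?_, ?_⟩
  · -- equality ⟹ diagonal
    intro heq
    have hrows_eq : ∀ j, eta (c j) = ∑ k, B j k * eta (x k) := by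
      have hsum0 : ∑ j, (eta (c j) - ∑ k, B j k * eta (x k)) = 0 := by
        rw [Finset.sum_sub_distrib, hswap, ← vnEntropy_eq hH, heq, sub_self]
      intro j
      have := (Finset.sum_eq_zero_iff_of_nonneg
        (fun j _ => sub_nonneg.mpr (jrow j))).mp hsum0 j (Finset.mem_univ j)
      linarith [this]
    have hconst : ∀ j k, B j k ≠ 0 → x k = c j := by
      intro j k hjk
      have heqj := (Real.strictConcaveOn_negMulLog.map_sum_eq_iff' (t := Finset.univ)
        (w := B j) (p := x) (fun k _ => hBnn j k) (hrow j) (fun k _ => hxnn k)).mp ?_ k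
        (Finset.mem_univ k) hjk
      · rw [heqj]
        rw [hcB j]
        simp [smul_eq_mul]
      · rw [← eta_eq]
        have : ∑ i, B j i • x i = c j := by rw [hcB j]; simp [smul_eq_mul]
        rw [this, hrows_eq j]
        simp [smul_eq_mul, eta_eq]
    ext a b'
    by_cases hab : a = b'
    · subst hab
      rw [hc a, Matrix.diagonal_apply_eq]
    · rw [Matrix.diagonal_apply_ne _ hab, hent a b']
      have hterm : ∀ k, U a k * (x k : ℂ) * (starRingEnd ℂ) (U b' k)
          = (c a : ℂ) * (U a k * (starRingEnd ℂ) (U b' k)) := by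
        intro k
        by_cases h1 : U a k = 0
        · simp [h1]
        by_cases h2 : U b' k = 0
        · simp [h2]
        have : x k = c a := hconst a k (fun h => h1 (Complex.normSq_eq_zero.mp h))
        rw [this]; ring
      rw [Finset.sum_congr rfl (fun k _ => hterm k), ← Finset.mul_sum]
      have : ∑ k, U a k * (starRingEnd ℂ) (U b' k) = 0 := by
        have h := congrFun (congrFun hUU a) b'
        have h2 : (U * star U) a b' = ∑ k, U a k * (starRingEnd ℂ) (U b' k) := by
          simp [Matrix.mul_apply, Matrix.star_apply, Matrix.conjTranspose_apply]
        rw [h2] at h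
        rw [h, Matrix.one_apply_ne hab]
      rw [this, mul_zero]
  · -- diagonal ⟹ equality
    intro hdiag
    rw [vnEntropy_eq hH]
    exact multiset_eig hH 1 (by simp) c (by simpa using hdiag)

lemma spectral_family_vec {n : ℕ} {p : Fin n → Matrix (Fin n) (Fin n) ℂ}
    (hp : IsSpectralFamily p) (j : Fin n) :
    ∃ w : Fin n → ℂ, ∀ a b, p j a b = w a * (starRingEnd ℂ) (w b) := by
  classical
  have hH : (p j).IsHermitian := hp.1 j
  have hidem : p j * p j = p j := by simpa using hp.2.1 j j
  have htr : (p j).trace = 1 := hp.2.2.2 j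
  set U : Matrix (Fin n) (Fin n) ℂ := (hH.eigenvectorUnitary : Matrix (Fin n) (Fin n) ℂ) with hU
  have hUU : U * star U = 1 := Matrix.mem_unitaryGroup_iff.mp hH.eigenvectorUnitary.2
  have hUU' : star U * U = 1 := Matrix.mem_unitaryGroup_iff'.mp hH.eigenvectorUnitary.2
  set x : Fin n → ℝ := hH.eigenvalues with hx
  have hspec : p j = U * Matrix.diagonal (fun k => (x k : ℂ)) * star U := by
    simpa [Function.comp_def] using hH.spectral_theorem
  -- eigenvalues are 0 or 1
  have hsq : ∀ k, x k * x k = x k := by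
    intro k
    have h2 : U * Matrix.diagonal (fun k => ((x k * x k : ℝ) : ℂ)) * star U
        = U * Matrix.diagonal (fun k => (x k : ℂ)) * star U := by
      have : (U * Matrix.diagonal (fun k => (x k : ℂ)) * star U)
          * (U * Matrix.diagonal (fun k => (x k : ℂ)) * star U)
          = U * Matrix.diagonal (fun k => ((x k * x k : ℝ) : ℂ)) * star U := by
        have hmid : Matrix.diagonal (fun k => (x k : ℂ)) * (star U * U)
            * Matrix.diagonal (fun k => (x k : ℂ))
            = Matrix.diagonal (fun k => ((x k * x k : ℝ) : ℂ)) := by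
          rw [hUU', mul_one, Matrix.diagonal_mul_diagonal]
          push_cast; rfl
        calc (U * Matrix.diagonal (fun k => (x k : ℂ)) * star U)
            * (U * Matrix.diagonal (fun k => (x k : ℂ)) * star U)
            = U * (Matrix.diagonal (fun k => (x k : ℂ)) * (star U * U)
              * Matrix.diagonal (fun k => (x k : ℂ))) * star U := by
              simp only [Matrix.mul_assoc]
          _ = _ := by rw [hmid]
      rw [this.symm, ← hspec, hidem, hspec]
    -- cancel U on both sides
    have key : ∀ C : Matrix (Fin n) (Fin n) ℂ, star U * (U * C * star U) * U = C := by
      intro C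
      have : star U * (U * C * star U) * U = (star U * U) * C * (star U * U) := by
        noncomm_ring
      rw [this, hUU', one_mul, mul_one]
    have hdiag : Matrix.diagonal (fun k => ((x k * x k : ℝ) : ℂ))
        = Matrix.diagonal (fun k => (x k : ℂ)) := by
      have h3 := congrArg (fun M => star U * M * U) h2
      rwa [key, key] at h3
    have := congrFun (congrFun hdiag k) k
    simp only [Matrix.diagonal_apply_eq] at this
    exact_mod_cast this
  have hsum : ∑ k, x k = 1 := by
    have h1 : (p j).trace = ∑ k, (x k : ℂ) := by
      rw [hspec, Matrix.trace_mul_cycle, hUU', one_mul, Matrix.trace_diagonal]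
    rw [htr] at h1
    have : ((∑ k, x k : ℝ) : ℂ) = 1 := by push_cast; exact h1.symm
    exact_mod_cast this
  -- exactly one eigenvalue equal to 1
  have h01 : ∀ k, x k = 0 ∨ x k = 1 := by
    intro k
    have h0 : x k * (x k - 1) = 0 := by rw [mul_sub, mul_one, hsq k, sub_self]
    rcases mul_eq_zero.mp h0 with h | h
    · exact Or.inl h
    · exact Or.inr (by linarith)
  obtain ⟨k₀, hk₀⟩ : ∃ k₀, x k₀ = 1 := by
    by_contra hno
    push_neg at hno
    have : ∀ k, x k = 0 := fun k => (h01 k).resolve_right (hno k)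
    rw [Finset.sum_congr rfl fun k _ => this k] at hsum
    simp at hsum
  have hsingle : ∀ k, x k = if k = k₀ then 1 else 0 := by
    intro k
    by_cases hk : k = k₀
    · subst hk; simp [hk₀]
    · simp only [if_neg hk]
      rcases h01 k with h | h
      · exact h
      · exfalso
        have hnn : ∀ m ∈ Finset.univ, 0 ≤ x m := by
          intro m _
          rcases h01 m with h' | h' <;> simp [h']
        have := Finset.add_le_sum hnn (Finset.mem_univ k) (Finset.mem_univ k₀) hk
        rw [hsum, h, hk₀] at this
        linarith
  refine ⟨fun a => U a k₀, fun a b => ?_⟩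
  rw [hspec, Matrix.mul_apply]
  rw [Finset.sum_eq_single k₀]
  · rw [Matrix.mul_diagonal, hsingle k₀, if_pos rfl, Matrix.star_apply]
    push_cast
    rw [mul_one]
    rfl
  · intro k _ hk
    rw [Matrix.mul_diagonal, hsingle k, if_neg hk]
    push_cast
    rw [mul_zero, zero_mul]
  · intro h; exact absurd (Finset.mem_univ k₀) h

lemma pinch {n : ℕ} {X : Matrix (Fin n) (Fin n) ℂ} (hX : X.PosSemidef)
    {p : Fin n → Matrix (Fin n) (Fin n) ℂ} (hp : IsSpectralFamily p)
    (b : Fin n → ℝ) (hb : ∀ j, ((b j : ℂ)) = (X * p j).trace) :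
    vnEntropy X ≤ ∑ j, eta (b j) ∧
      (vnEntropy X = ∑ j, eta (b j) ↔ X = ∑ j, (b j : ℂ) • p j) := by
  classical
  choose v hv using fun j => spectral_family_vec hp j
  set V : Matrix (Fin n) (Fin n) ℂ := Matrix.of (fun a j => v j a) with hVdef
  -- inner products
  have htrpp : ∀ j k, (p j * p k).trace
      = (∑ c, (starRingEnd ℂ) (v j c) * v k c) * (∑ a, v j a * (starRingEnd ℂ) (v k a)) := by
    intro j k
    rw [Matrix.trace]
    simp only [Matrix.diag_apply, Matrix.mul_apply, hv]
    rw [Finset.sum_comm]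
    rw [Finset.sum_mul]
    refine Finset.sum_congr rfl fun c _ => ?_
    rw [Finset.mul_sum]
    refine Finset.sum_congr rfl fun a _ => ?_
    ring
  have hsV : star V * V = 1 := by
    ext j k
    rw [Matrix.mul_apply, Matrix.one_apply]
    simp only [Matrix.star_apply, Matrix.conjTranspose_apply, hVdef, Matrix.of_apply]
    by_cases hjk : j = k
    · subst hjk
      rw [if_pos rfl]
      have h1 : (p j).trace = ∑ a, star (v j a) * v j a := by
        rw [Matrix.trace]
        simp only [Matrix.diag_apply, hv]
        exact Finset.sum_congr rfl fun a _ => mul_comm _ _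
      rw [← h1, hp.2.2.2 j]
    · simp only [if_neg hjk]
      have h0 : (p j * p k).trace = 0 := by rw [hp.2.1 j k, if_neg hjk, Matrix.trace_zero]
      rw [htrpp] at h0
      rcases mul_eq_zero.mp h0 with h | h
      · exact h
      · -- second factor is conj of first
        have : (starRingEnd ℂ) (∑ c, (starRingEnd ℂ) (v j c) * v k c)
            = ∑ a, v j a * (starRingEnd ℂ) (v k a) := by
          rw [map_sum]
          exact Finset.sum_congr rfl fun a _ => by simp [mul_comm]
        rw [← this] at h
        simpa using (starRingEnd ℂ).injective (h.trans (map_zero (starRingEnd ℂ)).symm)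
  have hVs : V * star V = 1 := mul_eq_one_comm.mp hsV
  -- p j in terms of V
  have hpV : ∀ (c : Fin n → ℝ), ∑ j, (c j : ℂ) • p j
      = V * Matrix.diagonal (fun j => (c j : ℂ)) * star V := by
    intro c
    ext a b'
    rw [Matrix.mul_apply]
    simp only [Matrix.sum_apply, Matrix.smul_apply, smul_eq_mul, hv,
      Matrix.mul_diagonal, Matrix.star_apply, Matrix.conjTranspose_apply, hVdef, Matrix.of_apply]
    refine Finset.sum_congr rfl fun j _ => ?_
    ring_nf
    rfl
  set Y : Matrix (Fin n) (Fin n) ℂ := star V * X * V with hY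
  have hYpsd : Y.PosSemidef := by
    have := hX.conjTranspose_mul_mul_same (B := V)
    simpa [Matrix.star_eq_conjTranspose, hY] using this
  have hXY : X = V * Y * star V := by
    rw [hY]
    have : V * (star V * X * V) * star V = (V * star V) * X * (V * star V) := by noncomm_ring
    rw [this, hVs, one_mul, mul_one]
  have hYdiag : ∀ j, Y j j = (b j : ℂ) := by
    intro j
    rw [hb j, hY, Matrix.trace]
    rw [Matrix.mul_apply]
    simp only [Matrix.diag_apply, Matrix.mul_apply, Matrix.star_apply,
      Matrix.conjTranspose_apply, hVdef, Matrix.of_apply, hv, Complex.star_def]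
    rw [Finset.sum_comm]
    refine Finset.sum_congr rfl fun a _ => ?_
    rw [Finset.sum_mul]
    refine Finset.sum_congr rfl fun c _ => ?_
    ring
  obtain ⟨hle, hiff⟩ := core_diag hYpsd b hYdiag
  -- entropy transfer
  have hEE : vnEntropy X = vnEntropy Y := by
    have hHX : X.IsHermitian := hX.1
    have hHY : Y.IsHermitian := hYpsd.1
    rw [vnEntropy_eq hHX, vnEntropy_eq hHY]
    set U : Matrix (Fin n) (Fin n) ℂ := (hHY.eigenvectorUnitary : Matrix (Fin n) (Fin n) ℂ)
    have hUU : U * star U = 1 := Matrix.mem_unitaryGroup_iff.mp hHY.eigenvectorUnitary.2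
    have hYspec : Y = U * Matrix.diagonal (fun k => (hHY.eigenvalues k : ℂ)) * star U := by
      simpa [Function.comp_def] using hHY.spectral_theorem
    have hXdec : X = (V * U) * Matrix.diagonal (fun k => (hHY.eigenvalues k : ℂ)) * star (V * U) := by
      conv_lhs => rw [hXY]
      conv_lhs => rw [hYspec]
      rw [StarMul.star_mul]
      noncomm_ring
    have hVU : (V * U) * star (V * U) = 1 := by
      rw [StarMul.star_mul]
      have : V * U * (star U * star V) = V * (U * star U) * star V := by noncomm_ring
      rw [this, hUU, mul_one, hVs]
    rw [multiset_eig hHX (V * U) hVU hHY.eigenvalues hXdec]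
  rw [hEE]
  refine ⟨hle, hiff.trans ?_⟩
  constructor
  · intro hYd
    rw [hXY, hYd, ← hpV]
  · intro hXs
    have : V * Y * star V = V * Matrix.diagonal (fun j => (b j : ℂ)) * star V := by
      rw [← hXY, hXs, hpV]
    have h2 := congrArg (fun M => star V * M * V) this
    have key : ∀ C : Matrix (Fin n) (Fin n) ℂ, star V * (V * C * star V) * V = C := by
      intro C
      have : star V * (V * C * star V) * V = (star V * V) * C * (star V * V) := by noncomm_ring
      rw [this, hsV, one_mul, mul_one]
    rwa [key, key] at h2

end Aux

theorem stmt_14 {n : ℕ} (Φ : Matrix (Fin n) (Fin n) ℂ →ₗ[ℂ] Matrix (Fin n) (Fin n) ℂ)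
    (hΦ : IsPUTP Φ)
    (D : Matrix (Fin n) (Fin n) ℂ) (hD : D.PosSemidef) (htr : D.trace = 1)
    (lam mu : Fin n → ℝ) (e p : Fin n → Matrix (Fin n) (Fin n) ℂ)
    (he : IsSpectralFamily e) (hp : IsSpectralFamily p)
    (hDdec : D = ∑ i, (lam i : ℂ) • e i)
    (hΦDdec : Φ D = ∑ j, (mu j : ℂ) • p j)
    (b : Fin n → Fin n → ℝ)
    (hb : ∀ i j, (b i j : ℂ) = (Φ (e i) * p j).trace) :
    (∑ i, lam i * vnEntropy (Φ (e i))) = (∑ i, lam i * ∑ j, eta (b i j)) ↔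
      ∀ i, lam i ≠ 0 → Φ (e i) = ∑ j, (b i j : ℂ) • p j := by
  classical
  -- each e i is PSD
  have hePSD : ∀ i, (e i).PosSemidef := by
    intro i
    have h1 : (e i)ᴴ * e i = e i := by
      rw [(he.1 i).eq]
      simpa using he.2.1 i i
    rw [← h1]
    exact Matrix.posSemidef_conjTranspose_mul_self (e i)
  -- lam is nonnegative
  have hlam : ∀ i, 0 ≤ lam i := by
    intro i
    have htrDe : (D * e i).trace = (lam i : ℂ) := by
      rw [hDdec, Matrix.sum_mul, Matrix.trace_sum]
      rw [Finset.sum_eq_single i]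
      · rw [Matrix.smul_mul, Matrix.trace_smul]
        rw [show e i * e i = e i by simpa using he.2.1 i i, he.2.2.2 i]
        simp
      · intro k _ hk
        rw [Matrix.smul_mul, Matrix.trace_smul,
          show e k * e i = 0 by simpa [hk] using he.2.1 k i]
        simp
      · intro h; exact absurd (Finset.mem_univ i) h
    have hpos : 0 ≤ (D * e i).trace := by
      have hpsd : ((e i)ᴴ * D * e i).PosSemidef := hD.conjTranspose_mul_mul_same (e i)
      rw [(he.1 i).eq] at hpsd
      have h2 : (e i * D * e i).trace = (D * e i).trace := by
        rw [Matrix.trace_mul_cycle,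
          show e i * e i = e i by simpa using he.2.1 i i, Matrix.trace_mul_comm]
      rw [← h2]
      exact psd_trace_nonneg hpsd
    rw [htrDe] at hpos
    exact Complex.zero_le_real.mp hpos
  -- apply the pinching lemma to each Φ (e i)
  have H : ∀ i, vnEntropy (Φ (e i)) ≤ ∑ j, eta (b i j) ∧
      (vnEntropy (Φ (e i)) = ∑ j, eta (b i j) ↔ Φ (e i) = ∑ j, (b i j : ℂ) • p j) :=
    fun i => pinch (hΦ.1 (e i) (hePSD i)) hp (b i) (hb i)
  constructor
  · intro hsum i hlami
    have hzero : ∑ i, lam i * ((∑ j, eta (b i j)) - vnEntropy (Φ (e i))) = 0 := by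
      have : ∑ i, lam i * ((∑ j, eta (b i j)) - vnEntropy (Φ (e i)))
          = (∑ i, lam i * ∑ j, eta (b i j)) - ∑ i, lam i * vnEntropy (Φ (e i)) := by
        rw [← Finset.sum_sub_distrib]
        exact Finset.sum_congr rfl fun i _ => by ring
      rw [this, ← hsum, sub_self]
    have heach := (Finset.sum_eq_zero_iff_of_nonneg
      (fun i _ => mul_nonneg (hlam i) (sub_nonneg.mpr (H i).1))).mp hzero i
      (Finset.mem_univ i)
    have : (∑ j, eta (b i j)) - vnEntropy (Φ (e i)) = 0 :=
      (mul_eq_zero.mp heach).resolve_left hlami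
    exact (H i).2.mp (by linarith)
  · intro hcond
    refine Finset.sum_congr rfl fun i _ => ?_
    by_cases hl : lam i = 0
    · rw [hl, zero_mul, zero_mul]
    · rw [(H i).2.mpr (hcond i hl)]
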